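/- arXiv:2510.01590 — 2 statements merged into one kernel-verified Lean document; each statement's English description precedes it below -/
import Mathlib

section
/- Let x be a solution of the multi-patch chikungunya model with nonnegative components and initial history φ ∈ Ω(0). Then for every patch i and every t ≥ 0 one has L_s^i(t) + L_I^i(t) ≤ M^i; in particular the larvae components of the solution are bounded on [0,∞). -/
open MeasureTheory Set

/-!
STATEMENT 1: Let x be a solution of the multi-patch chikungunya model with
nonnegative components and initial history φ ∈ Ω(0).  Then for every patch i
and every t ≥ 0 one has L_s^i(t) + L_I^i(t) ≤ M^i; in particular the larvae
components of the solution are bounded on [0,∞).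
-/

/-- `x` is a solution of the multi-patch chikungunya model with initial history
`φ` on `[-ttil, 0]`.  Component indices in `Fin 10`:
`0 = S_h, 1 = E_h, 2 = I_h, 3 = A_h, 4 = R_h, 5 = L_I, 6 = L_s, 7 = S_m,
8 = E_m, 9 = I_m`. -/
def IsModelSol (n : ℕ)
    (R : Fin n → ℝ) (μh ηh τh a p βmh βhm : ℝ) (m : Fin n → Fin n → ℝ)
    (bm μm μl K : Fin n → ℝ → ℝ) (μb : ℝ → ℝ)
    (τ τl τ' τl' : Fin n → ℝ → ℝ) (ttil : ℝ)
    (φ x : ℝ → Fin n → Fin 10 → ℝ) : Prop :=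
  (∀ s ∈ Set.Icc (-ttil) (0:ℝ), x s = φ s) ∧
  ContinuousOn x (Set.Ici (-ttil)) ∧
  ∀ t > (0:ℝ), ∀ i : Fin n,
    HasDerivAt (fun s => x s i 0)
      (R i - bm i t * βmh * x t i 0 * x t i 9 - μh * x t i 0
        + ∑ j ∈ Finset.univ.erase i, (m j i * x t j 0 - m i j * x t i 0)) t ∧
    HasDerivAt (fun s => x s i 1)
      (bm i t * βmh * x t i 0 * x t i 9
        - bm i (t - τh) * βmh * x (t - τh) i 0 * x (t - τh) i 9
          * Real.exp (-(μh * τh))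
        - μh * x t i 1
        + ∑ j ∈ Finset.univ.erase i, (m j i * x t j 1 - m i j * x t i 1)) t ∧
    HasDerivAt (fun s => x s i 2)
      ((1 - a) * βmh * bm i (t - τh) * x (t - τh) i 0 * x (t - τh) i 9
          * Real.exp (-(μh * τh))
        - (ηh + μh) * x t i 2) t ∧
    HasDerivAt (fun s => x s i 3)
      (a * βmh * bm i (t - τh) * x (t - τh) i 0 * x (t - τh) i 9
          * Real.exp (-(μh * τh))
        - (ηh + μh) * x t i 3
        + ∑ j ∈ Finset.univ.erase i, (m j i * x t j 3 - m i j * x t i 3)) t ∧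
    HasDerivAt (fun s => x s i 4)
      (ηh * (x t i 2 + x t i 3) - μh * x t i 4
        + ∑ j ∈ Finset.univ.erase i, (m j i * x t j 4 - m i j * x t i 4)) t ∧
    HasDerivAt (fun s => x s i 5)
      (μb t * (1 - (x t i 6 + x t i 5) / K i t) * p * x t i 9
        - μl i t * x t i 5) t ∧
    HasDerivAt (fun s => x s i 6)
      (μb t * (1 - (x t i 6 + x t i 5) / K i t)
          * (x t i 7 + x t i 8 + (1 - p) * x t i 9)
        - μl i t * x t i 6) t ∧
    HasDerivAt (fun s => x s i 7)
      ((1 - τl' i t) * μb (t - τl i t)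
          * (1 - (x (t - τl i t) i 6 + x (t - τl i t) i 5) / K i (t - τl i t))
          * (x (t - τl i t) i 7 + x (t - τl i t) i 8 + (1 - p) * x (t - τl i t) i 9)
          * Real.exp (-(∫ u in (t - τl i t)..t, μl i u))
        - bm i t * βhm * x t i 7 * (x t i 2 + x t i 3)
        - μm i t * x t i 7) t ∧
    HasDerivAt (fun s => x s i 8)
      (bm i t * βhm * x t i 7 * (x t i 2 + x t i 3) - μm i t * x t i 8
        - (1 - τ' i t) * βhm * bm i (t - τ i t)
          * (x (t - τ i t) i 2 + x (t - τ i t) i 3) * x (t - τ i t) i 7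
          * Real.exp (-(∫ u in (t - τ i t)..t, μm i u))) t ∧
    HasDerivAt (fun s => x s i 9)
      ((1 - τl' i t) * μb (t - τl i t)
          * (1 - (x (t - τl i t) i 6 + x (t - τl i t) i 5) / K i (t - τl i t))
          * p * x (t - τl i t) i 9
          * Real.exp (-(∫ u in (t - τl i t)..t, μl i u))
        + (1 - τ' i t) * βhm * bm i (t - τ i t)
          * (x (t - τ i t) i 2 + x (t - τ i t) i 3) * x (t - τ i t) i 7
          * Real.exp (-(∫ u in (t - τ i t)..t, μm i u))
        - μm i t * x t i 9) t

/-- the admissible set `Ω(0)` of initial histories. -/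
def InOmega0 (n : ℕ) (βhm : ℝ)
    (bm : Fin n → ℝ → ℝ) (K : Fin n → ℝ → ℝ) (τ : Fin n → ℝ → ℝ) (ttil : ℝ)
    (φ : ℝ → Fin n → Fin 10 → ℝ) : Prop :=
  ContinuousOn φ (Set.Icc (-ttil) 0) ∧
  (∀ s ∈ Set.Icc (-ttil) (0:ℝ), ∀ (i : Fin n) (c : Fin 10), 0 ≤ φ s i c) ∧
  (∀ i : Fin n, ∀ s ∈ Set.Icc (-ttil) (0:ℝ), φ s i 6 + φ s i 5 ≤ K i s) ∧
  (∀ i : Fin n, φ 0 i 8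
    = ∫ u in (-(τ i 0))..0, bm i u * βhm * φ u i 7 * (φ u i 2 + φ u i 3))

theorem larvae_bounded
    (n : ℕ) (hn : 0 < n) (w : ℝ) (hw : 0 < w)
    (R : Fin n → ℝ) (hR : ∀ i, 0 ≤ R i)
    (μh ηh τh a p βmh βhm : ℝ)
    (hμh : 0 < μh) (hηh : 0 ≤ ηh) (hτh : 0 < τh)
    (ha : a ∈ Set.Icc (0:ℝ) 1) (hp : p ∈ Set.Icc (0:ℝ) 1)
    (hβmh : 0 ≤ βmh) (hβhm : 0 ≤ βhm)
    (m : Fin n → Fin n → ℝ) (hm : ∀ i j, i ≠ j → 0 ≤ m i j)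
    (bm μm μl K : Fin n → ℝ → ℝ) (μb : ℝ → ℝ)
    (hbm : ∀ i, Continuous (bm i) ∧ (∀ t, 0 < bm i t) ∧ Function.Periodic (bm i) w)
    (hμm : ∀ i, Continuous (μm i) ∧ (∀ t, 0 < μm i t) ∧ Function.Periodic (μm i) w)
    (hμl : ∀ i, Continuous (μl i) ∧ (∀ t, 0 < μl i t) ∧ Function.Periodic (μl i) w)
    (hK : ∀ i, Continuous (K i) ∧ (∀ t, 0 < K i t) ∧ Function.Periodic (K i) w)
    (hμb : Continuous μb ∧ (∀ t, 0 < μb t) ∧ Function.Periodic μb w)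
    (τ τl τ' τl' : Fin n → ℝ → ℝ)
    (hτ : ∀ i, (∀ t, HasDerivAt (τ i) (τ' i t) t) ∧ Continuous (τ' i) ∧
      (∀ t, 0 < τ i t) ∧ Function.Periodic (τ i) w ∧ (∀ t, τ' i t < 1))
    (hτl : ∀ i, (∀ t, HasDerivAt (τl i) (τl' i t) t) ∧ Continuous (τl' i) ∧
      (∀ t, 0 < τl i t) ∧ Function.Periodic (τl i) w ∧ (∀ t, τl' i t < 1))
    (ttil : ℝ)
    (httil : ttil = ⨆ i : Fin n,
      max (max (sSup (τ i '' Set.Icc 0 w)) (sSup (τl i '' Set.Icc 0 w))) τh)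
    (M : Fin n → ℝ) (hM : ∀ i t, K i t ≤ M i)
    (φ : ℝ → Fin n → Fin 10 → ℝ)
    (hφ : InOmega0 n βhm bm K τ ttil φ)
    (x : ℝ → Fin n → Fin 10 → ℝ)
    (hx : IsModelSol n R μh ηh τh a p βmh βhm m bm μm μl K μb τ τl τ' τl' ttil φ x)
    (hxnn : ∀ t ≥ -ttil, ∀ (i : Fin n) (c : Fin 10), 0 ≤ x t i c) :
    ∀ (i : Fin n), ∀ t ≥ (0:ℝ), x t i 6 + x t i 5 ≤ M i := by
  -- `ttil` is nonnegative
  intro i T hT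
  have httil0 : (0:ℝ) ≤ ttil := by
    have hne : Nonempty (Fin n) := ⟨⟨0, hn⟩⟩
    have hb : BddAbove (Set.range fun i : Fin n =>
        max (max (sSup (τ i '' Set.Icc 0 w)) (sSup (τl i '' Set.Icc 0 w))) τh) :=
      Set.Finite.bddAbove (Set.finite_range _)
    have := le_ciSup hb (⟨0, hn⟩ : Fin n)
    have h1 : τh ≤ max (max (sSup (τ (⟨0, hn⟩ : Fin n) '' Set.Icc 0 w))
        (sSup (τl (⟨0, hn⟩ : Fin n) '' Set.Icc 0 w))) τh := le_max_right _ _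
    rw [httil]
    exact le_trans (le_of_lt hτh) (le_trans h1 this)
  obtain ⟨hxφ, hxcont, hode⟩ := hx
  -- the total larvae function and its derivative formula
  set V : ℝ → ℝ := fun s => x s i 6 + x s i 5 with hV
  set g : ℝ → ℝ := fun s =>
    μb s * (1 - V s / K i s) * (x s i 7 + x s i 8 + x s i 9) - μl i s * V s with hg
  have hVderiv : ∀ t > (0:ℝ), HasDerivAt V (g t) t := by
    intro t ht
    obtain ⟨_, _, _, _, _, h5, h6, _⟩ := hode t ht i
    have := h6.add h5
    refine this.congr_deriv ?_
    simp only [hg, hV]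
    ring
  -- continuity facts
  have hsub : Set.Ici (0:ℝ) ⊆ Set.Ici (-ttil) := by
    intro s hs
    exact le_trans (by linarith : -ttil ≤ 0) hs
  have hxc : ∀ c : Fin 10, ContinuousOn (fun s => x s i c) (Set.Ici (0:ℝ)) := by
    intro c
    exact (((continuous_apply c).comp (continuous_apply i)).comp_continuousOn hxcont).mono hsub
  have hVc : ContinuousOn V (Set.Ici (0:ℝ)) := (hxc 6).add (hxc 5)
  have hgc : ContinuousOn g (Set.Ici (0:ℝ)) := by
    have h1 : ContinuousOn (fun s => μb s) (Set.Ici (0:ℝ)) := hμb.1.continuousOn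
    have hKne : ∀ s ∈ Set.Ici (0:ℝ), K i s ≠ 0 := fun s _ => ((hK i).2.1 s).ne'
    exact ((h1.mul ((continuousOn_const.sub (hVc.div ((hK i).1.continuousOn) hKne)))).mul
      (((hxc 7).add (hxc 8)).add (hxc 9))).sub (((hμl i).1.continuousOn).mul hVc)
  -- right derivative at 0
  have hV0 : HasDerivWithinAt V (g 0) (Set.Ici 0) 0 := by
    apply hasDerivWithinAt_Ici_of_tendsto_deriv (s := Set.Ioi (0:ℝ))
    · intro s hs
      exact ((hVderiv s hs).differentiableAt.differentiableWithinAt)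
    · exact (hVc 0 Set.self_mem_Ici).mono Set.Ioi_subset_Ici_self
    · exact self_mem_nhdsWithin
    · have h1 : Filter.Tendsto g (nhdsWithin 0 (Set.Ioi 0)) (nhds (g 0)) :=
        ((hgc 0 Set.self_mem_Ici).mono Set.Ioi_subset_Ici_self)
      apply h1.congr'
      filter_upwards [self_mem_nhdsWithin] with s hs
      exact ((hVderiv s hs).deriv).symm
  -- initial condition
  have hV0le : V 0 ≤ M i := by
    have h0 : (0:ℝ) ∈ Set.Icc (-ttil) 0 := ⟨by linarith, le_refl _⟩
    have := hxφ 0 h0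
    have hφK := hφ.2.2.1 i 0 h0
    simp only [hV, this]
    exact le_trans hφK (hM i 0)
  -- the fencing argument on [0, T]
  have key : ∀ ⦃s⦄, s ∈ Set.Icc (0:ℝ) T → V s ≤ M i := by
    apply image_le_of_deriv_right_lt_deriv_boundary (f' := g) (B := fun _ => M i)
      (B' := fun _ => 0)
    · exact hVc.mono (Set.Icc_subset_Ici_self)
    · intro s hs
      rcases eq_or_lt_of_le hs.1 with h | h
      · rw [← h]; exact hV0
      · exact (hVderiv s h).hasDerivWithinAt
    · exact hV0le
    · exact fun s => hasDerivAt_const s (M i)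
    · intro s hs hVs
      have hK0 : 0 < K i s := (hK i).2.1 s
      have hKM : K i s ≤ M i := hM i s
      have hs0 : -ttil ≤ s := le_trans (by linarith) hs.1
      have h7 := hxnn s hs0 i 7
      have h8 := hxnn s hs0 i 8
      have h9 := hxnn s hs0 i 9
      have hμb0 : 0 < μb s := hμb.2.1 s
      have hμl0 : 0 < μl i s := (hμl i).2.1 s
      have hfac : 1 - V s / K i s ≤ 0 := by
        rw [sub_nonpos, le_div_iff₀ hK0, one_mul, hVs]
        exact hKM
      have hterm1 : μb s * (1 - V s / K i s) * (x s i 7 + x s i 8 + x s i 9) ≤ 0 :=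
        mul_nonpos_of_nonpos_of_nonneg
          (mul_nonpos_of_nonneg_of_nonpos hμb0.le hfac) (by linarith)
      have hterm2 : 0 < μl i s * V s := by
        apply mul_pos hμl0
        rw [hVs]; linarith
      show μb s * (1 - V s / K i s) * (x s i 7 + x s i 8 + x s i 9) - μl i s * V s < 0
      exact sub_neg.mpr (lt_of_le_of_lt hterm1 hterm2)
  exact key ⟨hT, le_refl T⟩
end

section
/- The linear system (μ_h + Σ_{j≠i} m_ij) S_i − Σ_{j≠i} m_ji S_j = R^i, i = 1,…,n, has a unique solution (S̄_1,…,S̄_n) ∈ ℝ^n, and this solution is componentwise nonnegative. Equivalently, the disease-free human subsystem (S_h^i)' = R^i − μ_h S_h^i + Σ_{j≠i}(m_ji S_h^j − m_ij S_h^i) has a unique equilibrium, whose components S̄_h^i = (R^i + Σ_{j≠i} m_ji S̄_h^j)/(μ_h + Σ_{j≠i} m_ij) are nonnegative. -/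
/-!
STATEMENT 15: The linear system
  (μ_h + Σ_{j≠i} m_ij) S_i − Σ_{j≠i} m_ji S_j = R^i,  i = 1,…,n,
has a unique solution, and this solution is componentwise nonnegative.
Equivalently, the disease-free human subsystem has a unique equilibrium with
nonnegative components S̄_h^i = (R^i + Σ_{j≠i} m_ji S̄_h^j)/(μ_h + Σ_{j≠i} m_ij).
-/

/-- Key lemma: any solution of the linear system with nonnegative right-hand side
is componentwise nonnegative. -/
lemma key_nonneg (n : ℕ) (μh : ℝ) (hμh : 0 < μh)
    (R : Fin n → ℝ) (hR : ∀ i, 0 ≤ R i)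
    (m : Fin n → Fin n → ℝ) (hm : ∀ i j, i ≠ j → 0 ≤ m i j)
    (S : Fin n → ℝ)
    (hS : ∀ i, (μh + ∑ j ∈ Finset.univ.erase i, m i j) * S i
              - ∑ j ∈ Finset.univ.erase i, m j i * S j = R i) :
    ∀ i, 0 ≤ S i := by
  classical
  by_contra h
  push_neg at h
  obtain ⟨k, hk⟩ := h
  set N : Finset (Fin n) := Finset.univ.filter (fun i => S i < 0) with hN
  have hmemN : ∀ i, i ∈ N ↔ S i < 0 := by
    intro i; simp [hN]
  have hNne : N.Nonempty := ⟨k, (hmemN k).mpr hk⟩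
  have hsplit : ∀ i ∈ N, Finset.univ.erase i = N.erase i ∪ (Finset.univ \ N) := by
    intro i hi
    ext j
    simp only [Finset.mem_erase, Finset.mem_union, Finset.mem_sdiff, Finset.mem_univ,
      and_true, true_and]
    constructor
    · intro hj
      by_cases hjN : j ∈ N
      · exact Or.inl ⟨hj, hjN⟩
      · exact Or.inr hjN
    · rintro (⟨hj, _⟩ | hj)
      · exact hj
      · intro hji; exact hj (hji ▸ hi)
  have hdisj : ∀ i : Fin n, Disjoint (N.erase i) (Finset.univ \ N) :=
    fun i => Finset.disjoint_of_subset_left (Finset.erase_subset i N)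
      Finset.disjoint_sdiff
  -- swap lemma
  have hswap : ∑ i ∈ N, ∑ j ∈ N.erase i, m i j * S i
      = ∑ i ∈ N, ∑ j ∈ N.erase i, m j i * S j := by
    rw [Finset.sum_comm' (t' := N) (s' := fun j => N.erase j)
      (by intro x y; simp only [Finset.mem_erase]; tauto)]
  have hRsum : ∑ i ∈ N, R i = μh * ∑ i ∈ N, S i
      + (∑ i ∈ N, ∑ j ∈ Finset.univ \ N, m i j * S i)
      - (∑ i ∈ N, ∑ j ∈ Finset.univ \ N, m j i * S j) := by
    have step : ∀ i ∈ N, R i = μh * S i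
        + ∑ j ∈ N.erase i, m i j * S i + ∑ j ∈ Finset.univ \ N, m i j * S i
        - ∑ j ∈ N.erase i, m j i * S j - ∑ j ∈ Finset.univ \ N, m j i * S j := by
      intro i hi
      rw [← hS i, hsplit i hi, Finset.sum_union (hdisj i), Finset.sum_union (hdisj i)]
      rw [add_mul, add_mul, Finset.sum_mul, Finset.sum_mul]
      ring
    rw [Finset.sum_congr rfl step]
    simp only [Finset.sum_sub_distrib, Finset.sum_add_distrib, hswap, Finset.mul_sum]
    ring
  have h1 : ∑ i ∈ N, S i < 0 := by
    have := Finset.sum_lt_sum_of_nonempty hNne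
      (f := fun i => S i) (g := fun _ => (0 : ℝ))
      (fun i hi => (hmemN i).mp hi)
    simpa using this
  have h2 : ∑ i ∈ N, ∑ j ∈ Finset.univ \ N, m i j * S i ≤ 0 := by
    apply Finset.sum_nonpos
    intro i hi
    apply Finset.sum_nonpos
    intro j hj
    have hij : i ≠ j := by
      rintro rfl
      exact (Finset.mem_sdiff.mp hj).2 hi
    exact mul_nonpos_of_nonneg_of_nonpos (hm i j hij) (le_of_lt ((hmemN i).mp hi))
  have h3 : 0 ≤ ∑ i ∈ N, ∑ j ∈ Finset.univ \ N, m j i * S j := by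
    apply Finset.sum_nonneg
    intro i hi
    apply Finset.sum_nonneg
    intro j hj
    have hij : j ≠ i := by
      rintro rfl
      exact (Finset.mem_sdiff.mp hj).2 hi
    have hSj : 0 ≤ S j := le_of_not_gt (fun hc => (Finset.mem_sdiff.mp hj).2 ((hmemN j).mpr hc))
    exact mul_nonneg (hm j i hij) hSj
  have hlt : ∑ i ∈ N, R i < 0 := by
    rw [hRsum]
    have : μh * ∑ i ∈ N, S i < 0 := mul_neg_of_pos_of_neg hμh h1
    linarith
  have hge : 0 ≤ ∑ i ∈ N, R i := Finset.sum_nonneg fun i _ => hR i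
  linarith

/-- The linear map corresponding to the system. -/
def sysMap (n : ℕ) (μh : ℝ) (m : Fin n → Fin n → ℝ) :
    (Fin n → ℝ) →ₗ[ℝ] (Fin n → ℝ) where
  toFun S := fun i => (μh + ∑ j ∈ Finset.univ.erase i, m i j) * S i
              - ∑ j ∈ Finset.univ.erase i, m j i * S j
  map_add' x y := by
    funext i
    simp only [Pi.add_apply]
    rw [Finset.sum_congr rfl (fun j _ => mul_add (m j i) (x j) (y j)),
      Finset.sum_add_distrib]
    ring
  map_smul' c x := by
    funext i
    simp only [Pi.smul_apply, smul_eq_mul, RingHom.id_apply]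
    rw [Finset.sum_congr rfl (fun j _ => (mul_left_comm (m j i) c (x j))),
      ← Finset.mul_sum]
    ring

theorem disease_free_human_equilibrium_exists_unique_nonneg
    (n : ℕ) (hn : 0 < n)
    (μh : ℝ) (hμh : 0 < μh)
    (R : Fin n → ℝ) (hR : ∀ i, 0 ≤ R i)
    (m : Fin n → Fin n → ℝ) (hm : ∀ i j, i ≠ j → 0 ≤ m i j) :
    ∃ S : Fin n → ℝ,
      (∀ i, (μh + ∑ j ∈ Finset.univ.erase i, m i j) * S i
              - ∑ j ∈ Finset.univ.erase i, m j i * S j = R i) ∧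
      (∀ i, 0 ≤ S i) ∧
      (∀ S' : Fin n → ℝ,
        (∀ i, (μh + ∑ j ∈ Finset.univ.erase i, m i j) * S' i
                - ∑ j ∈ Finset.univ.erase i, m j i * S' j = R i) → S' = S) := by
  classical
  set T := sysMap n μh m with hT
  have hTapp : ∀ (x : Fin n → ℝ) (i : Fin n),
      T x i = (μh + ∑ j ∈ Finset.univ.erase i, m i j) * x i
              - ∑ j ∈ Finset.univ.erase i, m j i * x j := fun x i => rfl
  have hinj : Function.Injective T := by
    rw [← LinearMap.ker_eq_bot, LinearMap.ker_eq_bot']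
    intro x hx
    have hx' : ∀ i, (μh + ∑ j ∈ Finset.univ.erase i, m i j) * x i
        - ∑ j ∈ Finset.univ.erase i, m j i * x j = 0 := by
      intro i
      rw [← hTapp x i, hx]
      rfl
    have hpos : ∀ i, 0 ≤ x i :=
      key_nonneg n μh hμh (fun _ => 0) (fun _ => le_refl 0) m hm x hx'
    have hneg : ∀ i, 0 ≤ -x i := by
      apply key_nonneg n μh hμh (fun _ => 0) (fun _ => le_refl 0) m hm
      intro i
      have h := hx' i
      have e : ∑ j ∈ Finset.univ.erase i, m j i * -x j
          = -∑ j ∈ Finset.univ.erase i, m j i * x j := by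
        simp [mul_neg]
      have e2 : (μh + ∑ j ∈ Finset.univ.erase i, m i j) * -x i
          = -((μh + ∑ j ∈ Finset.univ.erase i, m i j) * x i) := by ring
      rw [e, e2]
      linarith
    funext i
    have := hpos i
    have := hneg i
    simp only [Pi.zero_apply]
    linarith
  have hsurj : Function.Surjective T := LinearMap.injective_iff_surjective.mp hinj
  obtain ⟨S, hSdef⟩ := hsurj R
  have hSeq : ∀ i, (μh + ∑ j ∈ Finset.univ.erase i, m i j) * S i
      - ∑ j ∈ Finset.univ.erase i, m j i * S j = R i := by
    intro i
    rw [← hTapp S i, hSdef]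
  refine ⟨S, hSeq, key_nonneg n μh hμh R hR m hm S hSeq, ?_⟩
  intro S' hS'
  apply hinj
  rw [hSdef]
  funext i
  rw [hTapp S' i, hS' i]
end
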